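/- Let H be a finite group and V a finite-dimensional complex representation of H given by an injective homomorphism ρ : H → GL(V). Suppose V decomposes as a direct sum of H-invariant subspaces V = V' ⊕ V'', where V' is a direct sum of one-dimensional H-invariant subspaces on which H acts via characters χ_1, ..., χ_r : H → ℂˣ, and every irreducible subrepresentation of V'' has dimension at least 2. Let N = ⋂_{j=1}^r ker χ_j. If N is nontrivial, then the subspace V^N of N-fixed vectors has codimension at least 2 in V, i.e., dim V − dim V^N ≥ 2. -/

import Mathlib

open Module

lemma exists_inv_compl {H V : Type*} [Group H] [Fintype H] [AddCommGroup V] [Module ℂ V]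
    (ρ : Representation ℂ H V) (W : Submodule ℂ V) (hW : ∀ h, ∀ v ∈ W, ρ h v ∈ W) :
    ∃ U : Submodule ℂ V, IsCompl W U ∧ ∀ h, ∀ v ∈ U, ρ h v ∈ U := by
  obtain ⟨C, hC⟩ := Submodule.exists_isCompl W
  set f : V →ₗ[ℂ] V := W.subtype ∘ₗ W.projectionOnto C hC with hf
  set q : V →ₗ[ℂ] V := (Fintype.card H : ℂ)⁻¹ • ∑ h : H, (ρ h) ∘ₗ f ∘ₗ (ρ h⁻¹) with hq
  have hcard : (Fintype.card H : ℂ) ≠ 0 := Nat.cast_ne_zero.mpr Fintype.card_ne_zero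
  have hmem : ∀ v, q v ∈ W := by
    intro v
    simp only [hq, LinearMap.smul_apply, LinearMap.sum_apply, LinearMap.comp_apply]
    exact W.smul_mem _ (Submodule.sum_mem _ fun h _ => hW h _ (Submodule.coe_mem _))
  have hfix : ∀ w ∈ W, q w = w := by
    intro w hw
    simp only [hq, LinearMap.smul_apply, LinearMap.sum_apply, LinearMap.comp_apply]
    have : ∀ h : H, ρ h (f (ρ h⁻¹ w)) = w := by
      intro h
      have hw' : ρ h⁻¹ w ∈ W := hW h⁻¹ w hw
      have : f (ρ h⁻¹ w) = ρ h⁻¹ w := by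
        simp [hf, Submodule.projectionOnto_apply_left hC ⟨ρ h⁻¹ w, hw'⟩]
      rw [this, ← Module.End.mul_apply, ← map_mul, mul_inv_cancel, map_one,
        Module.End.one_apply]
    rw [Finset.sum_congr rfl fun h _ => this h, Finset.sum_const, Finset.card_univ,
      ← Nat.cast_smul_eq_nsmul ℂ, smul_smul, inv_mul_cancel₀ hcard, one_smul]
  have hequiv : ∀ (g : H) (v : V), q (ρ g v) = ρ g (q v) := by
    intro g v
    simp only [hq, LinearMap.smul_apply, LinearMap.sum_apply, LinearMap.comp_apply, map_smul,
      map_sum]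
    congr 1
    have key : ∀ y : H, ρ (g*y)⁻¹ (ρ g v) = ρ y⁻¹ v := by
      intro y
      rw [← Module.End.mul_apply, ← map_mul]
      congr 1
      group
    refine (Fintype.sum_equiv (Equiv.mulLeft g) _ _ fun y => ?_).symm
    simp only [Equiv.coe_mulLeft, key y, map_mul, Module.End.mul_apply]
  refine ⟨LinearMap.ker q, ⟨?_, ?_⟩, ?_⟩
  · rw [disjoint_iff]
    ext v
    simp only [Submodule.mem_inf, LinearMap.mem_ker, Submodule.mem_bot]
    constructor
    · rintro ⟨hv, hv0⟩; rw [← hfix v hv, hv0]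
    · rintro rfl; simp
  · rw [codisjoint_iff, eq_top_iff]
    intro v _
    have h1 : q v ∈ W := hmem v
    have h2 : v - q v ∈ LinearMap.ker q := by
      simp [LinearMap.mem_ker, map_sub, hfix _ h1]
    have hv : v = q v + (v - q v) := by abel
    rw [hv]
    exact Submodule.add_mem _ (Submodule.mem_sup_left h1) (Submodule.mem_sup_right h2)
  · intro h v hv
    simp only [LinearMap.mem_ker] at hv ⊢
    rw [hequiv, hv, map_zero]




/-- Let `H` be a finite group with a faithful finite-dimensional complex
representation `V` decomposing as `V = V' ⊕ V''` into `H`-invariant subspaces, where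
`V'` is a direct sum of one-dimensional `H`-invariant subspaces with characters
`χ 1, ..., χ r : H → ℂˣ`, and every irreducible subrepresentation of `V''` has dimension
at least `2`.  Let `N = ⋂ j, ker (χ j)`.  If `N` is nontrivial, then the subspace `V^N`
of `N`-fixed vectors has codimension at least `2` in `V`. -/
theorem stmt8 {H V : Type*} [Group H] [Finite H]
    [AddCommGroup V] [Module ℂ V] [FiniteDimensional ℂ V]
    (ρ : Representation ℂ H V) (hinj : Function.Injective ρ)
    (V' V'' : Submodule ℂ V)
    (hV'inv : ∀ (h : H), ∀ v ∈ V', ρ h v ∈ V')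
    (hV''inv : ∀ (h : H), ∀ v ∈ V'', ρ h v ∈ V'')
    (hsum : V' ⊔ V'' = ⊤) (hdisj : V' ⊓ V'' = ⊥)
    (r : ℕ) (L : Fin r → Submodule ℂ V) (χ : Fin r → (H →* ℂˣ))
    (hLdim : ∀ j, Module.finrank ℂ (L j) = 1)
    (hLact : ∀ j (h : H), ∀ v ∈ L j, ρ h v = (χ j h : ℂ) • v)
    (hLsup : (⨆ j, L j) = V')
    (hLind : iSupIndep L)
    (hV''irr : ∀ U : Submodule ℂ V, U ≤ V'' → U ≠ ⊥ →
      (∀ (h : H), ∀ v ∈ U, ρ h v ∈ U) →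
      (∀ U' : Submodule ℂ V, U' ≤ U → (∀ (h : H), ∀ v ∈ U', ρ h v ∈ U') →
        U' = ⊥ ∨ U' = U) →
      2 ≤ Module.finrank ℂ U)
    (N : Subgroup H) (hN : N = ⨅ j, (χ j).ker) (hNnontriv : N ≠ ⊥)
    (VN : Submodule ℂ V) (hVN : ∀ v : V, v ∈ VN ↔ ∀ n ∈ N, ρ n v = v) :
    2 ≤ Module.finrank ℂ V - Module.finrank ℂ VN := by
  have : Fintype H := Fintype.ofFinite H
  -- V' ≤ VN
  have hV'le : V' ≤ VN := by
    intro v hv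
    rw [hVN]
    intro n hn
    have hn' : ∀ j, n ∈ (χ j).ker := by
      rw [hN, Subgroup.mem_iInf] at hn; exact hn
    rw [← hLsup] at hv
    refine Submodule.iSup_induction L (motive := fun v => ρ n v = v) hv ?_ (map_zero _) ?_
    · intro j x hx
      rw [hLact j n x hx, show χ j n = 1 from hn' j]
      simp
    · intro x y hx hy
      rw [map_add, hx, hy]
  -- nontrivial element of N
  obtain ⟨n₀, hn₀N, hn₀⟩ : ∃ n ∈ N, n ≠ 1 := by
    have := mt (Subgroup.eq_bot_iff_forall N).2 hNnontriv
    push_neg at this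
    exact this
  -- VN ≠ ⊤
  have hVNne : VN ≠ ⊤ := by
    intro htop
    have hvn : ∀ v : V, ρ n₀ v = v := fun v =>
      (hVN v).1 (htop ▸ Submodule.mem_top) n₀ hn₀N
    exact hn₀ (hinj (LinearMap.ext fun v => by simp [hvn v]))
  -- N is normal
  have hNinv : ∀ h : H, ∀ n ∈ N, h⁻¹ * n * h ∈ N := by
    intro h n hn
    rw [hN, Subgroup.mem_iInf] at hn ⊢
    intro j
    have := hn j
    rw [MonoidHom.mem_ker] at this ⊢
    rw [map_mul, map_mul, this, mul_one, ← map_mul, inv_mul_cancel, map_one]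
  -- VN is invariant
  have hVNinv : ∀ h : H, ∀ v ∈ VN, ρ h v ∈ VN := by
    intro h v hv
    rw [hVN] at hv ⊢
    intro n hn
    have : ρ n (ρ h v) = ρ (h * (h⁻¹ * n * h)) v := by
      rw [← Module.End.mul_apply, ← map_mul]
      congr 1
      group
    rw [this, map_mul, Module.End.mul_apply, hv _ (hNinv h n hn)]
  set W : Submodule ℂ V := V'' ⊓ VN with hWdef
  have hWV'' : W ≤ V'' := inf_le_left
  have hWinv : ∀ h : H, ∀ v ∈ W, ρ h v ∈ W := by
    intro h v hv
    exact Submodule.mem_inf.2 ⟨hV''inv h v hv.1, hVNinv h v hv.2⟩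
  have hVN_eq : V' ⊔ W = VN := by
    have := sup_inf_assoc_of_le (x := V') V'' (z := VN) hV'le
    rw [hsum, top_inf_eq] at this
    exact this.symm
  have hdisj' : V' ⊓ W = ⊥ :=
    eq_bot_iff.mpr (le_trans (inf_le_inf_left V' inf_le_left) hdisj.le)
  have e1 : Module.finrank ℂ V' + Module.finrank ℂ V'' = Module.finrank ℂ V := by
    have := Submodule.finrank_sup_add_finrank_inf_eq V' V''
    rw [hsum, hdisj, finrank_top, finrank_bot, add_zero] at this
    exact this.symm
  have e2 : Module.finrank ℂ V' + Module.finrank ℂ W = Module.finrank ℂ VN := by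
    have := Submodule.finrank_sup_add_finrank_inf_eq V' W
    rw [hVN_eq, hdisj', finrank_bot, add_zero] at this
    exact this.symm
  by_contra hcon
  push_neg at hcon
  have hlt : Module.finrank ℂ VN < Module.finrank ℂ V :=
    Submodule.finrank_lt hVNne
  have hWlt : Module.finrank ℂ V'' = Module.finrank ℂ W + 1 := by omega
  obtain ⟨U0, hU0compl, hU0inv⟩ := exists_inv_compl ρ W hWinv
  set U : Submodule ℂ V := U0 ⊓ V'' with hUdef
  have hUle : U ≤ V'' := inf_le_right
  have hUinv : ∀ h : H, ∀ v ∈ U, ρ h v ∈ U := by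
    intro h v hv
    exact Submodule.mem_inf.2 ⟨hU0inv h v hv.1, hV''inv h v hv.2⟩
  have hsupWU : W ⊔ U = V'' := by
    have := sup_inf_assoc_of_le (x := W) U0 (z := V'') hWV''
    rw [codisjoint_iff.1 hU0compl.codisjoint, top_inf_eq] at this
    exact this.symm
  have hinfWU : W ⊓ U = ⊥ := by
    refine eq_bot_iff.mpr (le_trans (inf_le_inf_left W inf_le_left) ?_)
    rw [disjoint_iff.1 hU0compl.disjoint]
  have hUrank : Module.finrank ℂ U = 1 := by
    have := Submodule.finrank_sup_add_finrank_inf_eq W U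
    rw [hsupWU, hinfWU, finrank_bot, add_zero] at this
    omega
  have hUne : U ≠ ⊥ := by
    intro h
    rw [h, finrank_bot] at hUrank
    omega
  have := hV''irr U hUle hUne hUinv ?_
  · omega
  · intro U' hle _
    rcases eq_or_ne U' ⊥ with h | h
    · exact Or.inl h
    · refine Or.inr (Submodule.eq_of_le_of_finrank_le hle ?_)
      have : Module.finrank ℂ U' ≠ 0 := by rwa [Ne, Submodule.finrank_eq_zero]
      omega
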